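/- arXiv:2005.11666 — 8 statements merged into one kernel-verified Lean document; each statement's English description precedes it below -/
import Mathlib

section
/- Let a, b, c be rationals with ab+1 = r², ac+1 = s², bc+1 = t² for nonnegative rationals r, s, t, and abc ≠ 0. Then on the elliptic curve E: y² = (ax+1)(bx+1)(cx+1), the point S = (1/(abc), rst/(abc)) equals 2R, where R = ((rs+rt+st+1)/(abc), (r+s)(r+t)(s+t)/(abc)). -/
/-- The elliptic curve `E': y² = (x+ab)(x+ac)(x+bc)`, which is the Weierstrass model of
the curve `E: y² = (ax+1)(bx+1)(cx+1)` induced by the rational Diophantine triple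
`{a,b,c}` under the coordinate change `(x, y) ↦ (abc·x, abc·y)`. -/
def inducedCurve (a b c : ℚ) : WeierstrassCurve.Affine ℚ :=
  { a₁ := 0, a₂ := a * b + a * c + b * c, a₃ := 0,
    a₄ := a * b * c * (a + b + c), a₆ := (a * b * c) ^ 2 }

lemma some_eq_some_aux {F : Type*} [Field F] {W : WeierstrassCurve.Affine F} {x₁ y₁ x₂ y₂ : F}
    (h₁ : W.Nonsingular x₁ y₁) (h₂ : W.Nonsingular x₂ y₂) (hx : x₁ = x₂) (hy : y₁ = y₂) :
    WeierstrassCurve.Affine.Point.some _ _ h₁ = WeierstrassCurve.Affine.Point.some _ _ h₂ := by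
  subst hx; subst hy; rfl

/-- Under the identification `(x, y) ↦ (abc·x, abc·y)` of `E: y² = (ax+1)(bx+1)(cx+1)`
with its Weierstrass model, the point `S = (1/(abc), rst/(abc))` corresponds to `(1, rst)`
and `R = ((rs+rt+st+1)/(abc), (r+s)(r+t)(s+t)/(abc))` corresponds to
`(rs+rt+st+1, (r+s)(r+t)(s+t))`.  Then `S = 2R` on `E`. -/
theorem S_eq_two_R (a b c r s t : ℚ) (habc : a * b * c ≠ 0)
    (hr : 0 ≤ r) (hs : 0 ≤ s) (ht : 0 ≤ t)
    (hab : a * b + 1 = r ^ 2) (hac : a * c + 1 = s ^ 2) (hbc : b * c + 1 = t ^ 2)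
    (hS : (inducedCurve a b c).Nonsingular 1 (r * s * t))
    (hR : (inducedCurve a b c).Nonsingular (r * s + r * t + s * t + 1)
      ((r + s) * (r + t) * (s + t))) :
    (2 • WeierstrassCurve.Affine.Point.some _ _ hR : (inducedCurve a b c).Point) =
      WeierstrassCurve.Affine.Point.some _ _ hS := by
  have hab' : a * b = r ^ 2 - 1 := by linarith
  have hac' : a * c = s ^ 2 - 1 := by linarith
  have hbc' : b * c = t ^ 2 - 1 := by linarith
  have hA1 : (inducedCurve a b c).a₁ = 0 := rfl
  have hA3 : (inducedCurve a b c).a₃ = 0 := rfl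
  have hA2 : (inducedCurve a b c).a₂ = r ^ 2 + s ^ 2 + t ^ 2 - 3 := by
    show a * b + a * c + b * c = _; linarith
  have hA4 : (inducedCurve a b c).a₄ =
      (r^2-1)*(s^2-1) + (r^2-1)*(t^2-1) + (s^2-1)*(t^2-1) := by
    show a * b * c * (a + b + c) = _
    linear_combination ((s^2-1)+(t^2-1)) * hab' + (a*b + t^2 - 1) * hac' + (a*b + a*c) * hbc'
  -- the y-coordinate of R is nonzero
  have hy0 : (r + s) * (r + t) * (s + t) ≠ 0 := by
    rw [WeierstrassCurve.Affine.nonsingular_iff'] at hS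
    intro h
    rcases mul_eq_zero.mp h with h' | hst
    · rcases mul_eq_zero.mp h' with hrs | hrt
      · have hr0 : r = 0 := by linarith
        have hs0 : s = 0 := by linarith
        rcases hS.2 with hX | hY
        · apply hX; rw [hA1, hA2, hA4, hr0, hs0]; ring
        · apply hY; rw [hA1, hA3, hr0]; ring
      · have hr0 : r = 0 := by linarith
        have ht0 : t = 0 := by linarith
        rcases hS.2 with hX | hY
        · apply hX; rw [hA1, hA2, hA4, hr0, ht0]; ring
        · apply hY; rw [hA1, hA3, hr0]; ring
    · have hs0 : s = 0 := by linarith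
      have ht0 : t = 0 := by linarith
      rcases hS.2 with hX | hY
      · apply hX; rw [hA1, hA2, hA4, hs0, ht0]; ring
      · apply hY; rw [hA1, hA3, hs0]; ring
  have hyne : (r + s) * (r + t) * (s + t) ≠
      (inducedCurve a b c).negY (r * s + r * t + s * t + 1) ((r + s) * (r + t) * (s + t)) := by
    simp only [WeierstrassCurve.Affine.negY, hA1, hA3, zero_mul, sub_zero]
    intro h; apply hy0; linarith
  have hsl : (inducedCurve a b c).slope (r*s+r*t+s*t+1) (r*s+r*t+s*t+1)
      ((r+s)*(r+t)*(s+t)) ((r+s)*(r+t)*(s+t)) =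
      (3*(r*s+r*t+s*t+1)^2 + 2*(r^2+s^2+t^2-3)*(r*s+r*t+s*t+1) +
        ((r^2-1)*(s^2-1) + (r^2-1)*(t^2-1) + (s^2-1)*(t^2-1))) /
        (2*((r+s)*(r+t)*(s+t))) := by
    rw [WeierstrassCurve.Affine.slope_of_Y_ne rfl hyne, WeierstrassCurve.Affine.negY,
      hA1, hA2, hA3, hA4]
    congr 1 <;> ring
  have hX1 : (inducedCurve a b c).addX (r*s+r*t+s*t+1) (r*s+r*t+s*t+1)
      ((inducedCurve a b c).slope (r*s+r*t+s*t+1) (r*s+r*t+s*t+1)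
        ((r+s)*(r+t)*(s+t)) ((r+s)*(r+t)*(s+t))) = 1 := by
    rw [WeierstrassCurve.Affine.addX, hsl, hA1, hA2]
    have h1 : r + s ≠ 0 := fun h => hy0 (by rw [h]; ring)
    have h2 : r + t ≠ 0 := fun h => hy0 (by rw [h]; ring)
    have h3 : s + t ≠ 0 := fun h => hy0 (by rw [h]; ring)
    field_simp
    ring
  have hY1 : (inducedCurve a b c).addY (r*s+r*t+s*t+1) (r*s+r*t+s*t+1)
      ((r+s)*(r+t)*(s+t))
      ((inducedCurve a b c).slope (r*s+r*t+s*t+1) (r*s+r*t+s*t+1)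
        ((r+s)*(r+t)*(s+t)) ((r+s)*(r+t)*(s+t))) = r * s * t := by
    rw [WeierstrassCurve.Affine.addY, WeierstrassCurve.Affine.negAddY,
      WeierstrassCurve.Affine.negY, WeierstrassCurve.Affine.addX, hsl, hA1, hA2, hA3]
    have h1 : r + s ≠ 0 := fun h => hy0 (by rw [h]; ring)
    have h2 : r + t ≠ 0 := fun h => hy0 (by rw [h]; ring)
    have h3 : s + t ≠ 0 := fun h => hy0 (by rw [h]; ring)
    field_simp
    ring
  rw [two_smul, WeierstrassCurve.Affine.Point.add_self_of_Y_ne hyne]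
  exact some_eq_some_aux _ _ hX1 hY1
end

section
/- Let a, b, c be distinct nonzero rationals with ab+1 = r², ac+1 = s², bc+1 = t² for nonzero rationals r, s, t. On the elliptic curve E': y² = (x+ab)(x+ac)(x+bc), the point S' = (1, rst) satisfies 3S' = O if and only if 3 + 4(ab+ac+bc) + 6abc(a+b+c) + 12(abc)² − (abc)²(a² + b² + c² − 2ab − 2ac − 2bc) = 0. -/
/-- The elliptic curve `E': y² = (x+ab)(x+ac)(x+bc)` in Weierstrass form. -/
def curveE' (a b c : ℚ) : WeierstrassCurve.Affine ℚ :=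
  { a₁ := 0, a₂ := a * b + a * c + b * c, a₃ := 0,
    a₄ := a * b * c * (a + b + c), a₆ := (a * b * c) ^ 2 }

open WeierstrassCurve.Affine WeierstrassCurve.Affine.Point in
/-- On `E': y² = (x+ab)(x+ac)(x+bc)`, the point `S' = (1, rst)` satisfies `3S' = O`
if and only if
`3 + 4(ab+ac+bc) + 6abc(a+b+c) + 12(abc)² − (abc)²(a²+b²+c²−2ab−2ac−2bc) = 0`. -/
theorem three_S_eq_zero_iff (a b c r s t : ℚ) (ha : a ≠ 0) (hb : b ≠ 0) (hc : c ≠ 0)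
    (hab' : a ≠ b) (hac' : a ≠ c) (hbc' : b ≠ c)
    (hr : r ≠ 0) (hs : s ≠ 0) (ht : t ≠ 0)
    (hab : a * b + 1 = r ^ 2) (hac : a * c + 1 = s ^ 2) (hbc : b * c + 1 = t ^ 2)
    (hS : (curveE' a b c).Nonsingular 1 (r * s * t)) :
    (3 • WeierstrassCurve.Affine.Point.some _ _ hS : (curveE' a b c).Point) = 0 ↔
      3 + 4 * (a * b + a * c + b * c) + 6 * (a * b * c) * (a + b + c)
        + 12 * (a * b * c) ^ 2
        - (a * b * c) ^ 2 * (a ^ 2 + b ^ 2 + c ^ 2 - 2 * a * b - 2 * a * c - 2 * b * c)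
        = 0 := by
  have hy0 : r * s * t ≠ 0 := mul_ne_zero (mul_ne_zero hr hs) ht
  have hyne : r * s * t ≠ (curveE' a b c).negY 1 (r * s * t) := by
    simp only [negY, curveE']
    intro h
    apply hy0
    linarith
  have hL : (curveE' a b c).slope 1 1 (r * s * t) (r * s * t)
      = (3 + 2 * (a * b + a * c + b * c) + a * b * c * (a + b + c)) / (2 * (r * s * t)) := by
    rw [slope_of_Y_ne rfl hyne]
    simp only [curveE', negY]
    ring_nf
  set L := (curveE' a b c).slope 1 1 (r * s * t) (r * s * t) with hLdef
  -- x-coordinate condition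
  have hy2 : (r * s * t) ^ 2 = (a * b + 1) * (a * c + 1) * (b * c + 1) := by
    rw [hab, hac, hbc]; ring
  have hx_iff : (curveE' a b c).addX 1 1 L = 1 ↔
      3 + 4 * (a * b + a * c + b * c) + 6 * (a * b * c) * (a + b + c)
        + 12 * (a * b * c) ^ 2
        - (a * b * c) ^ 2 * (a ^ 2 + b ^ 2 + c ^ 2 - 2 * a * b - 2 * a * c - 2 * b * c)
        = 0 := by
    have h2y : (2 * (r * s * t)) ≠ 0 := mul_ne_zero two_ne_zero hy0
    have hE : (curveE' a b c).addX 1 1 L - 1 =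
        -(3 + 4 * (a * b + a * c + b * c) + 6 * (a * b * c) * (a + b + c)
          + 12 * (a * b * c) ^ 2
          - (a * b * c) ^ 2 * (a ^ 2 + b ^ 2 + c ^ 2 - 2 * a * b - 2 * a * c - 2 * b * c))
          / (2 * (r * s * t)) ^ 2 := by
      rw [hL]
      simp only [curveE', addX]
      field_simp
      linear_combination (-4 * (3 + (a * b + a * c + b * c))) * hy2
    constructor
    · intro hx
      have := hE
      rw [hx, sub_self] at this
      have h4 : ((2 * (r * s * t)) ^ 2 : ℚ) ≠ 0 := pow_ne_zero 2 h2y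
      field_simp at this
      linarith
    · intro hT
      have : (curveE' a b c).addX 1 1 L - 1 = 0 := by rw [hE, hT]; simp
      linarith
  rw [succ_nsmul, two_nsmul, add_self_of_Y_ne hyne, add_eq_zero_iff_eq_neg, neg_some,
    some.injEq]
  constructor
  · rintro ⟨hx, -⟩
    exact hx_iff.mp hx
  · intro hT
    have hx := hx_iff.mpr hT
    refine ⟨hx, ?_⟩
    simp only [addY, negAddY, hx]
    simp only [negY, addX]
    simp only [addX] at hx
    rw [hLdef] at hx
    linear_combination (-(curveE' a b c).slope 1 1 (r * s * t) (r * s * t) - (curveE' a b c).a₁) * hx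
end

section
/- Let a, b, c be distinct nonzero rationals with ab+1 = r², ac+1 = s², bc+1 = t² for nonzero rationals r, s, t. On the elliptic curve E': y² = (x+ab)(x+ac)(x+bc), the doubling of S' = (1, rst) equals the 2-torsion point (-ab, 0) if and only if (1 + 2ab − abc(c−a−b))² = 0, equivalently (ab+1)² = ab(c−a)(c−b). -/
lemma some_eq_some_iff' {F : Type*} [Field F] {W : WeierstrassCurve.Affine F} {x₁ y₁ x₂ y₂ : F}
    {h₁ : W.Nonsingular x₁ y₁} {h₂ : W.Nonsingular x₂ y₂} :
    (WeierstrassCurve.Affine.Point.some _ _ h₁ = WeierstrassCurve.Affine.Point.some _ _ h₂) ↔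
      x₁ = x₂ ∧ y₁ = y₂ := by
  constructor
  · intro h
    rw [WeierstrassCurve.Affine.Point.some.injEq] at h
    exact h
  · rintro ⟨rfl, rfl⟩
    rfl

/-- On `E': y² = (x+ab)(x+ac)(x+bc)`, the doubling of `S' = (1, rst)` equals the
2-torsion point `(-ab, 0)` if and only if `(1 + 2ab − abc(c−a−b))² = 0`,
equivalently `(ab+1)² = ab(c−a)(c−b)`. -/
theorem two_S_eq_C'_iff (a b c r s t : ℚ) (ha : a ≠ 0) (hb : b ≠ 0) (hc : c ≠ 0)
    (hab' : a ≠ b) (hac' : a ≠ c) (hbc' : b ≠ c)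
    (hr : r ≠ 0) (hs : s ≠ 0) (ht : t ≠ 0)
    (hab : a * b + 1 = r ^ 2) (hac : a * c + 1 = s ^ 2) (hbc : b * c + 1 = t ^ 2)
    (hS : (curveE' a b c).Nonsingular 1 (r * s * t))
    (hC : (curveE' a b c).Nonsingular (-(a * b)) 0) :
    ((2 • WeierstrassCurve.Affine.Point.some _ _ hS : (curveE' a b c).Point) =
        WeierstrassCurve.Affine.Point.some _ _ hC ↔
      (1 + 2 * a * b - a * b * c * (c - a - b)) ^ 2 = 0) ∧
    ((1 + 2 * a * b - a * b * c * (c - a - b)) ^ 2 = 0 ↔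
      (a * b + 1) ^ 2 = a * b * (c - a) * (c - b)) := by
  let W := curveE' a b c
  have hW : W = curveE' a b c := rfl
  have hrst : r * s * t ≠ 0 := by positivity
  have hy : r * s * t ≠ W.negY 1 (r * s * t) := by
    simp only [WeierstrassCurve.Affine.negY, hW, curveE']
    intro h
    apply hrst
    linarith
  have hD : (r * s * t) ^ 2 = (a * b + 1) * (a * c + 1) * (b * c + 1) := by
    rw [hab, hac, hbc]; ring
  -- the slope of the tangent line at S'
  have hL : W.slope 1 1 (r * s * t) (r * s * t) =
      (3 + 2 * (a * b + a * c + b * c) + a * b * c * (a + b + c)) / (2 * (r * s * t)) := by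
    rw [WeierstrassCurve.Affine.slope_of_Y_ne rfl hy]
    simp only [WeierstrassCurve.Affine.negY, hW, curveE']
    congr 1 <;> ring
  set L := W.slope 1 1 (r * s * t) (r * s * t) with hLdef
  have hx3 : W.addX 1 1 L = L ^ 2 - (a * b + a * c + b * c) - 2 := by
    simp only [WeierstrassCurve.Affine.addX, hW, curveE']
    ring
  have hL2 : 4 * (r * s * t) ^ 2 * L ^ 2 =
      (3 + 2 * (a * b + a * c + b * c) + a * b * c * (a + b + c)) ^ 2 := by
    rw [hL]
    field_simp
    ring
  have hE : (1 + 2 * a * b - a * b * c * (c - a - b)) ^ 2 =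
      4 * (r * s * t) ^ 2 * (W.addX 1 1 L + a * b) := by
    rw [hx3]
    linear_combination (-1 : ℚ) * hL2 + (4 * (a * c + b * c + 2)) * hD
  have h4 : (4 : ℚ) * (r * s * t) ^ 2 ≠ 0 := by positivity
  have hxiff : W.addX 1 1 L = -(a * b) ↔
      (1 + 2 * a * b - a * b * c * (c - a - b)) ^ 2 = 0 := by
    rw [hE]
    constructor
    · intro h; rw [h]; ring
    · intro h
      have := (mul_eq_zero.mp h).resolve_left h4
      linarith
  constructor
  · rw [two_nsmul, WeierstrassCurve.Affine.Point.add_self_of_Y_ne hy, some_eq_some_iff']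
    constructor
    · rintro ⟨hx, -⟩
      exact hxiff.mp hx
    · intro h
      have hx : W.addX 1 1 L = -(a * b) := hxiff.mpr h
      refine ⟨hx, ?_⟩
      -- the y-coordinate must be 0 since the point lies on the curve and x = -ab
      have heq := (WeierstrassCurve.Affine.nonsingular_add hS hS (fun h => hy h.2)).1
      rw [WeierstrassCurve.Affine.equation_iff] at heq
      rw [← hLdef] at heq ⊢
      rw [hx] at heq
      have ha₁ : W.a₁ = 0 := rfl
      have ha₃ : W.a₃ = 0 := rfl
      have ha₂ : W.a₂ = a * b + a * c + b * c := rfl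
      have ha₄ : W.a₄ = a * b * c * (a + b + c) := rfl
      have ha₆ : W.a₆ = (a * b * c) ^ 2 := rfl
      rw [ha₁, ha₃, ha₂, ha₄, ha₆] at heq
      have hy2 : (W.addY 1 1 (r * s * t) L) ^ 2 = 0 := by linear_combination heq
      exact pow_eq_zero_iff two_ne_zero |>.mp hy2
  · constructor
    · intro h
      have h0 : 1 + 2 * a * b - a * b * c * (c - a - b) = 0 :=
        pow_eq_zero_iff two_ne_zero |>.mp h
      linear_combination h0
    · intro h
      have h0 : 1 + 2 * a * b - a * b * c * (c - a - b) = 0 := by linear_combination h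
      rw [h0]; ring
end

section
/- For any rationals u, t with (ut+1)(t−u) ≠ 0, the numbers a = (ut+1)/(t−u), b = (u−t)/(ut+1), c = 4ut/((ut+1)(t−u)) satisfy: ab + 1, ac + 1, and bc + 1 are all squares of rational numbers. -/
/-- For rationals `u, t` with `(ut+1)(t−u) ≠ 0`, the numbers `a = (ut+1)/(t−u)`,
`b = (u−t)/(ut+1)`, `c = 4ut/((ut+1)(t−u))` form a rational Diophantine triple. -/
theorem parametrization_diophantine (u t : ℚ) (h : (u * t + 1) * (t - u) ≠ 0) :
    let a := (u * t + 1) / (t - u)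
    let b := (u - t) / (u * t + 1)
    let c := 4 * u * t / ((u * t + 1) * (t - u))
    (∃ q : ℚ, a * b + 1 = q ^ 2) ∧ (∃ q : ℚ, a * c + 1 = q ^ 2) ∧
      (∃ q : ℚ, b * c + 1 = q ^ 2) := by
  obtain ⟨h1, h2⟩ := mul_ne_zero_iff.mp h
  refine ⟨⟨0, ?_⟩, ⟨(t + u) / (t - u), ?_⟩, ⟨(u * t - 1) / (u * t + 1), ?_⟩⟩ <;>
    field_simp <;> ring
end

section
/- For any rational r with r(2r²−1) ≠ 0, the triple a = −2r(r−1)(r+1)/(2r²−1), b = −(2r²−1)/(2r), c = (2r−1)(2r+1)/(2r(2r²−1)) satisfies that ab+1, ac+1, bc+1 are all squares of rational numbers, and moreover the product of the conditions ab > 0 and bc > 0 is never simultaneously satisfiable: a, b, c never all have the same sign. -/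
/-- For rational `r` with `r(2r²−1) ≠ 0`, the triple `a = −2r(r−1)(r+1)/(2r²−1)`,
`b = −(2r²−1)/(2r)`, `c = (2r−1)(2r+1)/(2r(2r²−1))` is a rational Diophantine triple,
and the conditions `ab > 0` and `bc > 0` are never simultaneously satisfied:
`a, b, c` never all have the same sign. -/
theorem order_six_family (r : ℚ) (hr : r * (2 * r ^ 2 - 1) ≠ 0) :
    let a := -2 * r * (r - 1) * (r + 1) / (2 * r ^ 2 - 1)
    let b := -(2 * r ^ 2 - 1) / (2 * r)
    let c := (2 * r - 1) * (2 * r + 1) / (2 * r * (2 * r ^ 2 - 1))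
    ((∃ q : ℚ, a * b + 1 = q ^ 2) ∧ (∃ q : ℚ, a * c + 1 = q ^ 2) ∧
      (∃ q : ℚ, b * c + 1 = q ^ 2)) ∧
    ¬(0 < a * b ∧ 0 < b * c) ∧
    ¬((0 < a ∧ 0 < b ∧ 0 < c) ∨ (a < 0 ∧ b < 0 ∧ c < 0)) := by
  intro a b c
  obtain ⟨h1, h2⟩ : r ≠ 0 ∧ 2 * r ^ 2 - 1 ≠ 0 := by
    constructor <;> intro h <;> apply hr <;> rw [h] <;> ring
  have hab : a * b = r ^ 2 - 1 := by
    show (-2 * r * (r - 1) * (r + 1) / (2 * r ^ 2 - 1)) * (-(2 * r ^ 2 - 1) / (2 * r)) = _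
    field_simp
    ring
  have hbc : b * c = 1 / (4 * r ^ 2) - 1 := by
    show (-(2 * r ^ 2 - 1) / (2 * r)) * ((2 * r - 1) * (2 * r + 1) / (2 * r * (2 * r ^ 2 - 1))) = _
    field_simp
    ring
  have hnot : ¬(0 < a * b ∧ 0 < b * c) := by
    rintro ⟨hpab, hpbc⟩
    rw [hab] at hpab
    rw [hbc] at hpbc
    have h4 : (0:ℚ) < 4 * r ^ 2 := by positivity
    have : (1:ℚ) < r ^ 2 := by linarith
    have h5 : 4 * r ^ 2 < 1 := (one_lt_div h4).mp (by linarith)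
    linarith
  refine ⟨⟨⟨r, by rw [hab]; ring⟩, ⟨r / (2 * r ^ 2 - 1), ?_⟩, ⟨1 / (2 * r), ?_⟩⟩, hnot, ?_⟩
  · show (-2 * r * (r - 1) * (r + 1) / (2 * r ^ 2 - 1)) *
      ((2 * r - 1) * (2 * r + 1) / (2 * r * (2 * r ^ 2 - 1))) + 1 = _
    field_simp
    ring
  · rw [hbc]; field_simp; ring
  · rintro (⟨ha, hb, hc⟩ | ⟨ha, hb, hc⟩) <;>
      first
      | exact hnot ⟨mul_pos ha hb, mul_pos hb hc⟩
      | exact hnot ⟨mul_pos_of_neg_of_neg ha hb, mul_pos_of_neg_of_neg hb hc⟩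
end

section
/- For any rational T with T(T²−1) ≠ 0, the numbers a = 2T/(T²−1), b = (1−T²)/(2T), c = (6T²−T⁴−1)/(2T(T²−1)) satisfy that ab+1, ac+1, bc+1 are all squares of rational numbers, and ab = −1, so a, b, c have mixed signs. -/
/-- For rational `T` with `T(T²−1) ≠ 0`, the numbers `a = 2T/(T²−1)`,
`b = (1 − T²)/(2T)`, `c = (6T²−T⁴−1)/(2T(T²−1))` form a rational Diophantine triple,
and `ab = −1`, so `a, b, c` have mixed signs. -/
theorem z2z8_parametrization (T : ℚ) (hT : T * (T ^ 2 - 1) ≠ 0) :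
    let a := 2 * T / (T ^ 2 - 1)
    let b := (1 - T ^ 2) / (2 * T)
    let c := (6 * T ^ 2 - T ^ 4 - 1) / (2 * T * (T ^ 2 - 1))
    ((∃ q : ℚ, a * b + 1 = q ^ 2) ∧ (∃ q : ℚ, a * c + 1 = q ^ 2) ∧
      (∃ q : ℚ, b * c + 1 = q ^ 2)) ∧
    a * b = -1 ∧
    ¬((0 < a ∧ 0 < b ∧ 0 < c) ∨ (a < 0 ∧ b < 0 ∧ c < 0)) := by
  intro a b c
  have hT0 : T ≠ 0 := fun h => hT (by rw [h]; ring)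
  have hT1 : T ^ 2 - 1 ≠ 0 := fun h => hT (by rw [h]; ring)
  have hab : a * b = -1 := by
    show 2 * T / (T ^ 2 - 1) * ((1 - T ^ 2) / (2 * T)) = -1
    field_simp
    ring
  refine ⟨⟨⟨0, by rw [hab]; ring⟩, ⟨2 * T / (T ^ 2 - 1), ?_⟩,
    ⟨(T ^ 2 - 1) / (2 * T), ?_⟩⟩, hab, ?_⟩
  · show 2 * T / (T ^ 2 - 1) * ((6 * T ^ 2 - T ^ 4 - 1) / (2 * T * (T ^ 2 - 1))) + 1 = _
    field_simp
    ring
  · show (1 - T ^ 2) / (2 * T) * ((6 * T ^ 2 - T ^ 4 - 1) / (2 * T * (T ^ 2 - 1))) + 1 = _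
    field_simp
    ring
  · rintro (⟨ha, hb, -⟩ | ⟨ha, hb, -⟩)
    · have := mul_pos ha hb; rw [hab] at this; linarith
    · have := mul_pos_of_neg_of_neg ha hb; rw [hab] at this; linarith
end

section
/- Let r be rational with ab+1 = r², b = (r²−1)/a, c = a+b+2r, and a ≠ 0, r ∉ {0, ±1}. Then the condition (ab+1)² = ab(c−a)(c−b) is equivalent to the quadratic equation (2r³−2r)a² + (4r⁴−6r²+1)a + 2r⁵ + 2r − 4r³ = 0, whose discriminant in a is (2r²−1)²(1 − 4r⁴ + 4r²)... i.e., this quadratic has a rational root a if and only if 1 + 4r² − 4r⁴ is a square of a rational (for r with 2r³−2r ≠ 0). -/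
/-- Let `r` be rational with `r ∉ {0, ±1}` and `a ≠ 0`, and set `b = (r²−1)/a`
(so `ab + 1 = r²`) and `c = a + b + 2r`.  Then the order-4 condition
`(ab+1)² = ab(c−a)(c−b)` is equivalent to the quadratic equation
`(2r³−2r)a² + (4r⁴−6r²+1)a + 2r⁵ + 2r − 4r³ = 0`; the discriminant of this
quadratic in `a` is `1 + 4r² − 4r⁴`, and the quadratic has a rational root `a`
if and only if `1 + 4r² − 4r⁴` is a square of a rational. -/
theorem order_four_quadratic (r : ℚ) (hr0 : r ≠ 0) (hr1 : r ≠ 1) (hrm1 : r ≠ -1) :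
    (∀ a : ℚ, a ≠ 0 →
      let b := (r ^ 2 - 1) / a
      let c := a + b + 2 * r
      ((a * b + 1) ^ 2 = a * b * (c - a) * (c - b) ↔
        (2 * r ^ 3 - 2 * r) * a ^ 2 + (4 * r ^ 4 - 6 * r ^ 2 + 1) * a
          + 2 * r ^ 5 + 2 * r - 4 * r ^ 3 = 0)) ∧
    (4 * r ^ 4 - 6 * r ^ 2 + 1) ^ 2
        - 4 * (2 * r ^ 3 - 2 * r) * (2 * r ^ 5 + 2 * r - 4 * r ^ 3)
      = 1 + 4 * r ^ 2 - 4 * r ^ 4 ∧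
    ((∃ a : ℚ, (2 * r ^ 3 - 2 * r) * a ^ 2 + (4 * r ^ 4 - 6 * r ^ 2 + 1) * a
        + 2 * r ^ 5 + 2 * r - 4 * r ^ 3 = 0) ↔
      ∃ q : ℚ, q ^ 2 = 1 + 4 * r ^ 2 - 4 * r ^ 4) := by
  have hA : 2 * r ^ 3 - 2 * r ≠ 0 := by
    intro h
    have : 2 * r * (r - 1) * (r + 1) = 0 := by linarith [h]
    rcases mul_eq_zero.mp this with h' | h'
    · rcases mul_eq_zero.mp h' with h'' | h''
      · exact hr0 (by linarith [h''])
      · exact hr1 (by linarith [h''])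
    · exact hrm1 (by linarith [h'])
  refine ⟨?_, by ring, ?_⟩
  · intro a ha b c
    have hb : b = (r ^ 2 - 1) / a := rfl
    have hc : c = a + b + 2 * r := rfl
    constructor
    · intro h
      have key : ((a * b + 1) ^ 2 - a * b * (c - a) * (c - b)) * a =
          -((2 * r ^ 3 - 2 * r) * a ^ 2 + (4 * r ^ 4 - 6 * r ^ 2 + 1) * a
            + 2 * r ^ 5 + 2 * r - 4 * r ^ 3) := by
        rw [hc, hb]; field_simp; ring
      have : ((a * b + 1) ^ 2 - a * b * (c - a) * (c - b)) * a = 0 := by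
        rw [h]; ring
      linarith [key ▸ this]
    · intro h
      have key : (a * b + 1) ^ 2 - a * b * (c - a) * (c - b) =
          -((2 * r ^ 3 - 2 * r) * a ^ 2 + (4 * r ^ 4 - 6 * r ^ 2 + 1) * a
            + 2 * r ^ 5 + 2 * r - 4 * r ^ 3) / a := by
        rw [hc, hb]; field_simp; ring
      rw [h] at key
      simp at key
      linarith [key]
  · constructor
    · rintro ⟨a, h⟩
      refine ⟨2 * (2 * r ^ 3 - 2 * r) * a + (4 * r ^ 4 - 6 * r ^ 2 + 1), ?_⟩
      linear_combination (4 * (2 * r ^ 3 - 2 * r)) * h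
    · rintro ⟨q, hq⟩
      refine ⟨(-(4 * r ^ 4 - 6 * r ^ 2 + 1) + q) / (2 * (2 * r ^ 3 - 2 * r)), ?_⟩
      have h2 : (2 * (2 * r ^ 3 - 2 * r)) ≠ 0 := by
        intro h; exact hA (by linarith)
      field_simp
      have h3 : r ^ 2 - 1 ≠ 0 := fun h => hA (by linear_combination 2 * r * h)
      field_simp
      linear_combination hq
end

section
/- The quartic equation y² = 1 + 4x² − 4x⁴ has infinitely many rational solutions; in particular the associated elliptic curve Y² = X³ + X² + X + 1 has the rational point (0,1) of infinite order. -/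
/-- The elliptic curve `Y² = X³ + X² + X + 1`. -/
def curveE1 : WeierstrassCurve.Affine ℚ :=
  { a₁ := 0, a₂ := 1, a₃ := 0, a₄ := 1, a₆ := 1 }

namespace QuarticAux

open WeierstrassCurve.Affine

/-- Doubling map on affine coordinates for `curveE1`. -/
noncomputable def dP (p : ℚ × ℚ) : ℚ × ℚ :=
  (((3*p.1^2+2*p.1+1)/(2*p.2))^2 - 1 - 2*p.1,
   -(((3*p.1^2+2*p.1+1)/(2*p.2)) * ((((3*p.1^2+2*p.1+1)/(2*p.2))^2 - 1 - 2*p.1) - p.1) + p.2))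

/-- The sequence of points `2ⁿ • (0, 1)` on `curveE1`. -/
noncomputable def pseq : ℕ → ℚ × ℚ
  | 0 => (0, 1)
  | n + 1 => dP (pseq n)

lemma v2 : padicValRat 2 (2:ℚ) = 1 := by
  have := padicValRat.self (p := 2) one_lt_two
  exact_mod_cast this

lemma vodd (a : ℤ) (h : ¬ (2 ∣ a)) : padicValRat 2 (a:ℚ) = 0 := by
  rw [padicValRat.of_int]
  simp [padicValInt, padicValNat.eq_zero_iff]
  omega

lemma vadd {a b : ℚ} (ha : a ≠ 0) (hb : b ≠ 0)
    (h : padicValRat 2 a < padicValRat 2 b) :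
    a + b ≠ 0 ∧ padicValRat 2 (a + b) = padicValRat 2 a := by
  have hab : a + b ≠ 0 := by
    intro h0
    have hba : b = -a := by linarith [h0]
    rw [hba, padicValRat.neg] at h
    exact lt_irrefl _ h
  exact ⟨hab, padicValRat.add_eq_of_lt hab ha hb h⟩

lemma dP_equation (X Y : ℚ) (hY : Y ≠ 0) (hEq : Y^2 = X^3 + X^2 + X + 1) :
    (dP (X,Y)).2^2 = (dP (X,Y)).1^3 + (dP (X,Y)).1^2 + (dP (X,Y)).1 + 1 := by
  show (-(((3*X^2+2*X+1)/(2*Y)) * ((((3*X^2+2*X+1)/(2*Y))^2 - 1 - 2*X) - X) + Y))^2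
    = (((3*X^2+2*X+1)/(2*Y))^2 - 1 - 2*X)^3 + (((3*X^2+2*X+1)/(2*Y))^2 - 1 - 2*X)^2
      + (((3*X^2+2*X+1)/(2*Y))^2 - 1 - 2*X) + 1
  field_simp
  linear_combination (64 * Y^6) * hEq

lemma pseq_spec : ∀ n : ℕ,
    (pseq (n+1)).2 ^ 2 = (pseq (n+1)).1^3 + (pseq (n+1)).1^2 + (pseq (n+1)).1 + 1 ∧
    padicValRat 2 (pseq (n+1)).1 = -(2*(n:ℤ)+2) ∧
    padicValRat 2 (pseq (n+1)).2 = -(3*(n:ℤ)+3) := by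
  intro n
  induction n with
  | zero =>
    have h1 : pseq 1 = (-3/4, -5/8) := by
      show dP (0,1) = _
      simp only [dP]
      norm_num
    rw [h1]
    refine ⟨by norm_num, ?_, ?_⟩
    · show padicValRat 2 (-3/4 : ℚ) = _
      have h : (-3/4 : ℚ) = ((-3 : ℤ) : ℚ) / (2:ℚ)^2 := by norm_num
      rw [h, padicValRat.div (by norm_num) (by norm_num), padicValRat.pow, v2,
        vodd (-3) (by decide)]
      norm_num
    · show padicValRat 2 (-5/8 : ℚ) = _
      have h : (-5/8 : ℚ) = ((-5 : ℤ) : ℚ) / (2:ℚ)^3 := by norm_num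
      rw [h, padicValRat.div (by norm_num) (by norm_num), padicValRat.pow, v2,
        vodd (-5) (by decide)]
      norm_num
  | succ n ih =>
    obtain ⟨hEq, hvX, hvY⟩ := ih
    set X := (pseq (n+1)).1 with hXdef
    set Y := (pseq (n+1)).2 with hYdef
    have hX0 : X ≠ 0 := by
      intro h0; rw [h0] at hvX; simp at hvX; omega
    have hY0 : Y ≠ 0 := by
      intro h0; rw [h0] at hvY; simp at hvY; omega
    set L : ℚ := (3*X^2+2*X+1)/(2*Y) with hLdef
    have hpseq : pseq (n+2) = (L^2 - 1 - 2*X, -(L * ((L^2 - 1 - 2*X) - X) + Y)) := rfl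
    have h3X2ne : (3*X^2 : ℚ) ≠ 0 := mul_ne_zero (by norm_num) (pow_ne_zero 2 hX0)
    have hv3X2 : padicValRat 2 (3*X^2) = -(4*(n:ℤ)+4) := by
      rw [padicValRat.mul (by norm_num) (pow_ne_zero 2 hX0),
        padicValRat.pow, hvX, show ((3:ℚ)) = ((3:ℤ):ℚ) by norm_num, vodd 3 (by decide)]
      push_cast; ring
    have h2Xne : (2*X : ℚ) ≠ 0 := mul_ne_zero (by norm_num) hX0
    have hv2X : padicValRat 2 (2*X) = -(2*(n:ℤ)+1) := by
      rw [padicValRat.mul (by norm_num) hX0, v2, hvX]; ring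
    have s1 := vadd h2Xne (one_ne_zero) (by rw [hv2X, padicValRat.one]; omega)
    have s2 := vadd h3X2ne s1.1 (by rw [hv3X2, s1.2, hv2X]; omega)
    have hNe : (3*X^2+2*X+1 : ℚ) = 3*X^2 + (2*X + 1) := by ring
    have hNne : (3*X^2+2*X+1 : ℚ) ≠ 0 := by rw [hNe]; exact s2.1
    have hvN : padicValRat 2 (3*X^2+2*X+1) = -(4*(n:ℤ)+4) := by
      rw [hNe, s2.2, hv3X2]
    have h2Yne : (2*Y : ℚ) ≠ 0 := mul_ne_zero (by norm_num) hY0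
    have hv2Y : padicValRat 2 (2*Y) = -(3*(n:ℤ)+2) := by
      rw [padicValRat.mul (by norm_num) hY0, v2, hvY]; ring
    have hLne : L ≠ 0 := div_ne_zero hNne h2Yne
    have hvL : padicValRat 2 L = -((n:ℤ)+2) := by
      rw [hLdef, padicValRat.div hNne h2Yne, hvN, hv2Y]; ring
    have hvL2 : padicValRat 2 (L^2) = -(2*(n:ℤ)+4) := by
      rw [padicValRat.pow, hvL]; push_cast; ring
    have t1 := vadd (a := -(2*X)) (b := (-1 : ℚ)) (neg_ne_zero.mpr h2Xne) (by norm_num)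
      (by rw [padicValRat.neg, hv2X, show ((-1:ℚ)) = -(1:ℚ) by norm_num, padicValRat.neg,
            padicValRat.one]; omega)
    have t2 := vadd (pow_ne_zero 2 hLne) t1.1
      (by rw [hvL2, t1.2, padicValRat.neg, hv2X]; omega)
    have hX'e : L^2 - 1 - 2*X = L^2 + (-(2*X) + -1) := by ring
    have hX'ne : L^2 - 1 - 2*X ≠ 0 := by rw [hX'e]; exact t2.1
    have hvX' : padicValRat 2 (L^2 - 1 - 2*X) = -(2*(n:ℤ)+4) := by
      rw [hX'e, t2.2, hvL2]
    have t3 := vadd hX'ne (neg_ne_zero.mpr hX0)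
      (by rw [hvX', padicValRat.neg, hvX]; omega)
    have hXXe : (L^2 - 1 - 2*X) - X = (L^2 - 1 - 2*X) + (-X) := by ring
    have hXXne : (L^2 - 1 - 2*X) - X ≠ 0 := by rw [hXXe]; exact t3.1
    have hvXX : padicValRat 2 ((L^2 - 1 - 2*X) - X) = -(2*(n:ℤ)+4) := by
      rw [hXXe, t3.2, hvX']
    have hLXXne : L * ((L^2 - 1 - 2*X) - X) ≠ 0 := mul_ne_zero hLne hXXne
    have hvLXX : padicValRat 2 (L * ((L^2 - 1 - 2*X) - X)) = -(3*(n:ℤ)+6) := by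
      rw [padicValRat.mul hLne hXXne, hvL, hvXX]; ring
    have t4 := vadd hLXXne hY0 (by rw [hvLXX, hvY]; omega)
    have hvY' : padicValRat 2 (-(L * ((L^2 - 1 - 2*X) - X) + Y)) = -(3*(n:ℤ)+6) := by
      rw [padicValRat.neg, t4.2, hvLXX]
    refine ⟨?_, ?_, ?_⟩
    · have := dP_equation X Y hY0 hEq
      rw [show pseq (n+1+1) = dP (X, Y) from rfl]
      exact this
    · rw [hpseq]
      show padicValRat 2 (L^2 - 1 - 2*X) = _
      rw [hvX']; push_cast; ring
    · rw [hpseq]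
      show padicValRat 2 (-(L * ((L^2 - 1 - 2*X) - X) + Y)) = _
      rw [hvY']; push_cast; ring

lemma pseq_Y_ne (n : ℕ) : (pseq n).2 ≠ 0 := by
  cases n with
  | zero => exact one_ne_zero
  | succ n =>
    obtain ⟨_, _, hvY⟩ := pseq_spec n
    intro h0; rw [h0] at hvY; simp at hvY; omega

lemma pseq_X_inj {m n : ℕ} (h : (pseq (m+1)).1 = (pseq (n+1)).1) : m = n := by
  have hm := (pseq_spec m).2.1
  have hn := (pseq_spec n).2.1
  rw [h, hn] at hm
  omega

lemma quartic_mem (X Y : ℚ) (hEq : Y^2 = X^3 + X^2 + X + 1) :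
    ((1 - 2*X - X^2)/(1+X^2))^2
      = 1 + 4 * (Y/(1+X^2))^2 - 4 * (Y/(1+X^2))^4 := by
  have hd : (1+X^2) ≠ 0 := by positivity
  field_simp
  linear_combination (4*Y^2 + 4*X - 4*X^2 + 4*X^3 - 4*X^4) * hEq

lemma quartic_recover (X Y : ℚ) (hEq : Y^2 = X^3 + X^2 + X + 1) (hY : Y ≠ 0) :
    (1 - (1 - 2*X - X^2)/(1+X^2)) / (2 * (Y/(1+X^2))^2) = X := by
  have hd : (1+X^2) ≠ 0 := by positivity
  field_simp
  linear_combination (-2*X) * hEq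

/-- The map from indices to quartic points. -/
noncomputable def g (n : ℕ) : ℚ × ℚ :=
  ((pseq (n+1)).2/(1+(pseq (n+1)).1^2),
   (1 - 2*(pseq (n+1)).1 - (pseq (n+1)).1^2)/(1+(pseq (n+1)).1^2))

lemma g_mem (n : ℕ) : (g n).2 ^ 2 = 1 + 4 * (g n).1 ^ 2 - 4 * (g n).1 ^ 4 :=
  quartic_mem _ _ (pseq_spec n).1

lemma g_inj : Function.Injective g := by
  intro m n hmn
  have e1 : (1 - (g m).2) / (2 * (g m).1^2) = (pseq (m+1)).1 :=
    quartic_recover _ _ (pseq_spec m).1 (pseq_Y_ne (m+1))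
  have e2 : (1 - (g n).2) / (2 * (g n).1^2) = (pseq (n+1)).1 :=
    quartic_recover _ _ (pseq_spec n).1 (pseq_Y_ne (n+1))
  rw [hmn] at e1
  exact pseq_X_inj (e1.symm.trans e2)

lemma some_congr {W : WeierstrassCurve.Affine ℚ} {x₁ y₁ x₂ y₂ : ℚ}
    (hx : x₁ = x₂) (hy : y₁ = y₂) (h₁ : W.Nonsingular x₁ y₁) (h₂ : W.Nonsingular x₂ y₂) :
    Point.some _ _ h₁ = Point.some _ _ h₂ := by
  subst hx; subst hy; rfl

lemma negY_eq (x y : ℚ) : curveE1.negY x y = -y := by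
  simp [curveE1, WeierstrassCurve.Affine.negY]

lemma Y_ne_negY {x y : ℚ} (hy : y ≠ 0) : y ≠ curveE1.negY x y := by
  rw [negY_eq]; intro h; apply hy; linarith

lemma dP_coordX (x y : ℚ) (hy : y ≠ 0) :
    curveE1.addX x x (curveE1.slope x x y y) = (dP (x,y)).1 := by
  have hs : curveE1.slope x x y y = (3*x^2+2*x+1)/(2*y) := by
    rw [slope_of_Y_ne rfl (Y_ne_negY hy), negY_eq]
    norm_num [curveE1]
    ring_nf
  rw [WeierstrassCurve.Affine.addX, hs]
  show _ = ((3*x^2+2*x+1)/(2*y))^2 - 1 - 2*x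
  norm_num [curveE1]
  ring_nf

lemma dP_coordY (x y : ℚ) (hy : y ≠ 0) :
    curveE1.addY x x y (curveE1.slope x x y y) = (dP (x,y)).2 := by
  have hs : curveE1.slope x x y y = (3*x^2+2*x+1)/(2*y) := by
    rw [slope_of_Y_ne rfl (Y_ne_negY hy), negY_eq]
    norm_num [curveE1]
    ring_nf
  rw [WeierstrassCurve.Affine.addY, WeierstrassCurve.Affine.negAddY,
    WeierstrassCurve.Affine.negY, WeierstrassCurve.Affine.addX, hs]
  show _ = -(((3*x^2+2*x+1)/(2*y)) * ((((3*x^2+2*x+1)/(2*y))^2 - 1 - 2*x) - x) + y)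
  norm_num [curveE1]
  ring_nf
  exact Or.inl trivial

lemma smul_pseq (h : curveE1.Nonsingular 0 1) :
    ∀ n : ℕ, ∃ hn : curveE1.Nonsingular (pseq n).1 (pseq n).2,
      (2^n) • (WeierstrassCurve.Affine.Point.some _ _ h) = WeierstrassCurve.Affine.Point.some _ _ hn := by
  intro n
  induction n with
  | zero => exact ⟨h, by rw [pow_zero, one_nsmul]; rfl⟩
  | succ n ih =>
    obtain ⟨hn, hs⟩ := ih
    have hy : (pseq n).2 ≠ curveE1.negY (pseq n).1 (pseq n).2 := Y_ne_negY (pseq_Y_ne n)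
    have hAdd := nonsingular_add hn hn (fun hxy => hy hxy.right)
    have hn' : curveE1.Nonsingular (pseq (n+1)).1 (pseq (n+1)).2 := by
      have hx := dP_coordX (pseq n).1 (pseq n).2 (pseq_Y_ne n)
      have hy2 := dP_coordY (pseq n).1 (pseq n).2 (pseq_Y_ne n)
      rw [show ((pseq n).1, (pseq n).2) = pseq n from rfl] at hx hy2
      rw [show pseq (n+1) = dP (pseq n) from rfl, ← hx, ← hy2]
      exact hAdd
    refine ⟨hn', ?_⟩
    calc (2^(n+1)) • (WeierstrassCurve.Affine.Point.some _ _ h)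
        = (2^n * 2) • (WeierstrassCurve.Affine.Point.some _ _ h) := by rw [pow_succ]
      _ = 2 • ((2^n) • (WeierstrassCurve.Affine.Point.some _ _ h)) := mul_nsmul _ (2^n) 2
      _ = (2^n) • (WeierstrassCurve.Affine.Point.some _ _ h)
            + (2^n) • (WeierstrassCurve.Affine.Point.some _ _ h) := two_nsmul _
      _ = WeierstrassCurve.Affine.Point.some _ _ hn + WeierstrassCurve.Affine.Point.some _ _ hn := by
            rw [hs]
      _ = WeierstrassCurve.Affine.Point.some _ _ hAdd := Point.add_self_of_Y_ne hy
      _ = WeierstrassCurve.Affine.Point.some _ _ hn' := by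
            apply some_congr
            · have hx := dP_coordX (pseq n).1 (pseq n).2 (pseq_Y_ne n)
              rw [show ((pseq n).1, (pseq n).2) = pseq n from rfl] at hx
              exact hx
            · have hy2 := dP_coordY (pseq n).1 (pseq n).2 (pseq_Y_ne n)
              rw [show ((pseq n).1, (pseq n).2) = pseq n from rfl] at hy2
              exact hy2

/-- X-coordinate of a point (0 for the point at infinity). -/
def ptX : curveE1.Point → ℚ
  | .zero => 0
  | @WeierstrassCurve.Affine.Point.some _ _ _ x _ _ => x

end QuarticAux

/-- The quartic `y² = 1 + 4x² − 4x⁴` has infinitely many rational solutions;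
in particular the associated elliptic curve `Y² = X³ + X² + X + 1` has the
rational point `(0, 1)` of infinite order. -/
theorem quartic_infinite_and_point_infinite_order :
    {p : ℚ × ℚ | p.2 ^ 2 = 1 + 4 * p.1 ^ 2 - 4 * p.1 ^ 4}.Infinite ∧
    ∀ h : curveE1.Nonsingular 0 1,
      ¬ IsOfFinAddOrder (WeierstrassCurve.Affine.Point.some 0 1 h) := by
  constructor
  · exact Set.infinite_of_injective_forall_mem QuarticAux.g_inj (fun n => QuarticAux.g_mem n)
  · intro h hfin
    set P := WeierstrassCurve.Affine.Point.some 0 1 h with hP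
    have hordpos : 0 < addOrderOf P := hfin.addOrderOf_pos
    have hni : ¬ Function.Injective (fun k : ℕ => (⟨2^(k+1) % addOrderOf P,
        Nat.mod_lt _ hordpos⟩ : Fin (addOrderOf P))) := by
      intro hinj
      exact (Finite.of_injective _ hinj).false
    rw [Function.not_injective_iff] at hni
    obtain ⟨k₁, k₂, heq, hne⟩ := hni
    have hmod : 2^(k₁+1) % addOrderOf P = 2^(k₂+1) % addOrderOf P := by
      simpa using congrArg Fin.val heq
    have hsmul : (2^(k₁+1)) • P = (2^(k₂+1)) • P := by
      rw [nsmul_eq_nsmul_iff_modEq]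
      exact hmod
    obtain ⟨h₁, hs₁⟩ := QuarticAux.smul_pseq h (k₁+1)
    obtain ⟨h₂, hs₂⟩ := QuarticAux.smul_pseq h (k₂+1)
    rw [hs₁, hs₂] at hsmul
    have hX : (QuarticAux.pseq (k₁+1)).1 = (QuarticAux.pseq (k₂+1)).1 :=
      congrArg QuarticAux.ptX hsmul
    exact hne (QuarticAux.pseq_X_inj hX)
end
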